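/- The commutator subgroup K_3 of the braid group B_3 is a free group of rank 2; more precisely, the group homomorphism from the free group on two generators FreeGroup (Fin 2) to B_3 sending the first generator to σ_2 σ_1⁻¹ and the second generator to σ_1⁻¹ σ_2 is injective and its range equals K_3. -/

import Mathlib

def braidRels (n : ℕ) : Set (FreeGroup (Fin (n - 1))) :=
  {r | (∃ i j : Fin (n - 1), 2 ≤ |(i : ℤ) - (j : ℤ)| ∧
        r = FreeGroup.of i * FreeGroup.of j * (FreeGroup.of i)⁻¹ * (FreeGroup.of j)⁻¹) ∨
       (∃ i j : Fin (n - 1), |(i : ℤ) - (j : ℤ)| = 1 ∧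
        r = FreeGroup.of i * FreeGroup.of j * FreeGroup.of i *
            (FreeGroup.of j)⁻¹ * (FreeGroup.of i)⁻¹ * (FreeGroup.of j)⁻¹)}

/-- The braid group `B n` on `n` strands, presented with generators `σ_1, …, σ_{n-1}`. -/
abbrev BraidGroup (n : ℕ) : Type := PresentedGroup (braidRels n)

/-- The generator `σ_{i+1}` of the braid group. -/
def braidGen {n : ℕ} (i : Fin (n - 1)) : BraidGroup n := PresentedGroup.of i

namespace K3aux
open FreeGroup SemidirectProduct

abbrev F2 := FreeGroup (Fin 2)
def A : F2 := .of 0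
def B : F2 := .of 1

def eHom : F2 →* F2 := FreeGroup.lift (fun i => if i = 0 then B⁻¹ * A else A)
def eInv : F2 →* F2 := FreeGroup.lift (fun i => if i = 0 then B else B * A⁻¹)

def e : F2 ≃* F2 :=
  MonoidHom.toMulEquiv eHom eInv
    (by ext i; fin_cases i <;> simp [eHom, eInv, A, B])
    (by ext i; fin_cases i <;> simp [eHom, eInv, A, B])

def φ : Multiplicative ℤ →* MulAut F2 := zpowersHom _ (e : MulAut F2)

abbrev G := SemidirectProduct F2 (Multiplicative ℤ) φ

lemma hφ1 (x : F2) : φ (.ofAdd 1) x = eHom x := rfl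
lemma hφneg (x : F2) : φ (.ofAdd 1)⁻¹ x = eInv x := rfl

lemma aux {H : Type*} [Group H] (u v : H) (h : u * v * u = v * u * v) :
    u * v * u * v⁻¹ * u⁻¹ * v⁻¹ = 1 := by rw [h]; group

lemma aux2 {H : Type*} [Group H] (u v : H)
    (h : u * v * u * v⁻¹ * u⁻¹ * v⁻¹ = 1) : u * v * u = v * u * v := by
  rw [show u * v * u * v⁻¹ * u⁻¹ * v⁻¹ = (u * v * u) * (v * u * v)⁻¹ by group] at h
  exact mul_inv_eq_one.mp h

lemma aux3 {H : Type*} [Group H] (u v : H) (h : u * v * u = v * u * v) :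
    v⁻¹ * u * v = u * v * u⁻¹ := by
  apply mul_left_cancel (a := v)
  rw [show v * (v⁻¹ * u * v) = u * v by group,
      show v * (u * v * u⁻¹) = (v * u * v) * u⁻¹ by group, ← h]
  group

lemma aux4 {H : Type*} [CommGroup H] (u v : H) (h : u * v * u = v * u * v) : u = v := by
  apply mul_left_cancel (a := u * v)
  rw [show u * v * u = u * v * u by rfl] at h
  rw [show (u * v) * v = v * u * v by rw [mul_comm u v]]
  exact h

lemma rel_holds : (⟨1, .ofAdd 1⟩ : G) * ⟨A, .ofAdd 1⟩ * ⟨1, .ofAdd 1⟩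
    = (⟨A, .ofAdd 1⟩ : G) * ⟨1, .ofAdd 1⟩ * ⟨A, .ofAdd 1⟩ := by
  have h2 : ∀ x : F2, φ (Multiplicative.ofAdd 1 * Multiplicative.ofAdd 1) x = eHom (eHom x) :=
    fun _ => rfl
  simp only [SemidirectProduct.ext_iff, mul_left, mul_right, map_one, mul_one, one_mul, hφ1, h2]
  refine ⟨?_, trivial⟩
  simp [eHom, A, B]

def g : Fin 2 → G := fun i => if i = 0 then ⟨1, .ofAdd 1⟩ else ⟨A, .ofAdd 1⟩

lemma g_rels : ∀ r ∈ braidRels 3, FreeGroup.lift g r = 1 := by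
  have h01 : FreeGroup.lift g (FreeGroup.of 0 * FreeGroup.of 1 * FreeGroup.of 0 *
      (FreeGroup.of 1)⁻¹ * (FreeGroup.of 0)⁻¹ * (FreeGroup.of 1)⁻¹) = 1 := by
    simp only [_root_.map_mul, _root_.map_inv, FreeGroup.lift_apply_of]
    rw [show g 0 = (⟨1, .ofAdd 1⟩ : G) from rfl, show g 1 = (⟨A, .ofAdd 1⟩ : G) from rfl]
    exact aux _ _ rel_holds
  have h10 : FreeGroup.lift g (FreeGroup.of 1 * FreeGroup.of 0 * FreeGroup.of 1 *
      (FreeGroup.of 0)⁻¹ * (FreeGroup.of 1)⁻¹ * (FreeGroup.of 0)⁻¹) = 1 := by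
    simp only [_root_.map_mul, _root_.map_inv, FreeGroup.lift_apply_of]
    rw [show g 0 = (⟨1, .ofAdd 1⟩ : G) from rfl, show g 1 = (⟨A, .ofAdd 1⟩ : G) from rfl]
    exact aux _ _ rel_holds.symm
  rintro r (⟨i, j, hij, rfl⟩ | ⟨i, j, hij, rfl⟩)
  · exfalso; fin_cases i <;> fin_cases j <;> simp_all
  · fin_cases i <;> fin_cases j
    · simp at hij
    · exact h01
    · exact h10
    · simp at hij

/-- the projection B₃ → F₂ ⋊ ℤ -/
def ψ : BraidGroup 3 →* G := PresentedGroup.toGroup g_rels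

/-- The braid relation in `BraidGroup 3`. -/
lemma braid_rel : braidGen (n := 3) 0 * braidGen (n := 3) 1 * braidGen (n := 3) 0
    = braidGen (n := 3) 1 * braidGen (n := 3) 0 * braidGen (n := 3) 1 := by
  have hr : (FreeGroup.of 0 * FreeGroup.of 1 * FreeGroup.of 0 * (FreeGroup.of 1)⁻¹ *
      (FreeGroup.of 0)⁻¹ * (FreeGroup.of 1)⁻¹ : FreeGroup (Fin 2)) ∈ braidRels 3 :=
    Or.inr ⟨0, 1, by norm_num, rfl⟩
  have h1 : PresentedGroup.mk (braidRels 3) (FreeGroup.of 0 * FreeGroup.of 1 * FreeGroup.of 0 *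
      (FreeGroup.of 1)⁻¹ * (FreeGroup.of 0)⁻¹ * (FreeGroup.of 1)⁻¹) = 1 :=
    (QuotientGroup.eq_one_iff _).2 (Subgroup.subset_normalClosure hr)
  simp only [_root_.map_mul, _root_.map_inv] at h1
  exact aux2 _ _ h1

abbrev σ₁ : BraidGroup 3 := braidGen (n := 3) 0
abbrev σ₂ : BraidGroup 3 := braidGen (n := 3) 1

abbrev L : F2 →* BraidGroup 3 :=
  FreeGroup.lift (fun i : Fin 2 =>
    if i = 0 then braidGen (n := 3) 1 * (braidGen (n := 3) 0)⁻¹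
    else (braidGen (n := 3) 0)⁻¹ * braidGen (n := 3) 1)

lemma L_A : L A = σ₂ * σ₁⁻¹ := by simp [A]
lemma L_B : L B = σ₁⁻¹ * σ₂ := by simp [B]

lemma Lconj (x : F2) : L (eHom x) = σ₁ * L x * σ₁⁻¹ := by
  have key : L.comp eHom = (MulAut.conj σ₁).toMonoidHom.comp L := by
    ext i
    fin_cases i
    · show L (eHom A) = MulAut.conj σ₁ (L A)
      rw [show eHom A = B⁻¹ * A by simp [eHom, A], _root_.map_mul, _root_.map_inv, L_A, L_B,
        MulAut.conj_apply]
      have h := aux3 σ₁ σ₂ braid_rel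
      rw [show (σ₁⁻¹ * σ₂)⁻¹ * (σ₂ * σ₁⁻¹) = (σ₂⁻¹ * σ₁ * σ₂) * σ₁⁻¹ by group, h]
      group
    · show L (eHom B) = MulAut.conj σ₁ (L B)
      rw [show eHom B = A by simp [eHom, B], L_A, MulAut.conj_apply, L_B]
      group
  exact DFunLike.congr_fun key x

lemma LconjInv (x : F2) : L (eInv x) = σ₁⁻¹ * L x * σ₁ := by
  have h2 := Lconj (eInv x)
  have h3 : eHom (eInv x) = x := e.apply_symm_apply x
  rw [h3] at h2
  rw [h2]; group

lemma Lzpow : ∀ (n : ℤ) (x : F2),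
    L (((e : MulAut F2) ^ n) x) = σ₁ ^ n * L x * σ₁ ^ (-n) := by
  intro n
  induction n using Int.induction_on with
  | zero => intro x; simp
  | succ k ih =>
      intro x
      have : ((e : MulAut F2) ^ ((k : ℤ) + 1)) x = ((e : MulAut F2) ^ (k : ℤ)) (eHom x) := by
        rw [zpow_add_one]; rfl
      rw [this, ih, Lconj]
      group
  | pred k ih =>
      intro x
      have : ((e : MulAut F2) ^ (-(k : ℤ) - 1)) x = ((e : MulAut F2) ^ (-(k : ℤ))) (eInv x) := by
        rw [zpow_sub_one]; rfl
      rw [this, ih, LconjInv]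
      group

def θ : G →* BraidGroup 3 :=
  SemidirectProduct.lift L (zpowersHom _ σ₁) (by
    intro n
    refine MonoidHom.ext fun x => ?_
    show L (φ n x) = MulAut.conj (σ₁ ^ n.toAdd) (L x)
    rw [MulAut.conj_apply, show φ n x = ((e : MulAut F2) ^ n.toAdd) x from rfl, Lzpow]
    group)


lemma θψ : θ.comp ψ = MonoidHom.id (BraidGroup 3) := by
  apply PresentedGroup.ext
  intro i
  fin_cases i
  · show θ (ψ (PresentedGroup.of 0)) = PresentedGroup.of 0
    rw [show ψ (PresentedGroup.of 0) = g 0 from PresentedGroup.toGroup.of g_rels]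
    show L 1 * σ₁ ^ (1 : ℤ) = σ₁
    simp
  · show θ (ψ (PresentedGroup.of 1)) = PresentedGroup.of 1
    rw [show ψ (PresentedGroup.of 1) = g 1 from PresentedGroup.toGroup.of g_rels]
    show L A * σ₁ ^ (1 : ℤ) = σ₂
    rw [L_A]; group

lemma ψL (x : F2) : ψ (L x) = SemidirectProduct.inl x := by
  have key : ψ.comp L = (SemidirectProduct.inl : F2 →* G) := by
    refine FreeGroup.ext_hom _ _ fun i => ?_
    fin_cases i
    · show ψ (L A) = SemidirectProduct.inl A
      rw [L_A, _root_.map_mul, _root_.map_inv,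
        show ψ σ₂ = g 1 from PresentedGroup.toGroup.of g_rels,
        show ψ σ₁ = g 0 from PresentedGroup.toGroup.of g_rels]
      show (⟨A, .ofAdd 1⟩ : G) * (⟨1, .ofAdd 1⟩ : G)⁻¹ = _
      ext
      · show A * φ (.ofAdd 1) (φ (.ofAdd 1)⁻¹ 1⁻¹) = A
        simp
      · show Multiplicative.ofAdd (1 : ℤ) * (Multiplicative.ofAdd (1 : ℤ))⁻¹ = 1
        simp
    · show ψ (L B) = SemidirectProduct.inl B
      rw [L_B, _root_.map_mul, _root_.map_inv,
        show ψ σ₂ = g 1 from PresentedGroup.toGroup.of g_rels,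
        show ψ σ₁ = g 0 from PresentedGroup.toGroup.of g_rels]
      show (⟨1, .ofAdd 1⟩ : G)⁻¹ * (⟨A, .ofAdd 1⟩ : G) = _
      ext
      · show φ (.ofAdd 1)⁻¹ 1⁻¹ * φ (.ofAdd 1)⁻¹ A = B
        rw [hφneg, hφneg]
        simp [eInv, A, B]
      · show (Multiplicative.ofAdd (1 : ℤ))⁻¹ * Multiplicative.ofAdd (1 : ℤ) = 1
        simp
  exact DFunLike.congr_fun key x

lemma L_inj : Function.Injective (L : F2 →* BraidGroup 3) := by
  intro x y h
  have := congrArg ψ h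
  rw [ψL, ψL] at this
  exact SemidirectProduct.inl_injective this

lemma range_le : (L : F2 →* BraidGroup 3).range ≤ commutator (BraidGroup 3) := by
  have hab : (Abelianization.of).comp (L : F2 →* BraidGroup 3) = 1 := by
    have hgen : Abelianization.of σ₁ = Abelianization.of σ₂ :=
      aux4 _ _ (by rw [← _root_.map_mul, ← _root_.map_mul, ← _root_.map_mul, ← _root_.map_mul,
        braid_rel])
    ext i
    fin_cases i
    · show Abelianization.of (L A) = 1
      rw [L_A, _root_.map_mul, _root_.map_inv, hgen, mul_inv_cancel]
    · show Abelianization.of (L B) = 1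
      rw [L_B, _root_.map_mul, _root_.map_inv, hgen, inv_mul_cancel]
  rintro y ⟨x, rfl⟩
  have h1 : Abelianization.of (L x) = 1 := DFunLike.congr_fun hab x
  exact (QuotientGroup.eq_one_iff _).mp h1

lemma le_range : commutator (BraidGroup 3) ≤ (L : F2 →* BraidGroup 3).range := by
  intro y hy
  have hker : ((SemidirectProduct.rightHom).comp ψ) y = 1 :=
    Abelianization.commutator_subset_ker _ hy
  have hr : (ψ y).right = 1 := hker
  have hinl : ψ y = SemidirectProduct.inl (ψ y).left := by
    rw [← SemidirectProduct.inl_left_mul_inr_right (ψ y), hr]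
    simp
  have hθ : θ (ψ y) = y := DFunLike.congr_fun θψ y
  refine ⟨(ψ y).left, ?_⟩
  conv_rhs => rw [← hθ, hinl]
  exact (SemidirectProduct.lift_inl _ _ _ _).symm

end K3aux

/-- The commutator subgroup of the braid group on 3 strands is free of rank 2, freely
generated by `σ_2 * σ_1⁻¹` and `σ_1⁻¹ * σ_2`. -/
theorem K3_free_of_rank_two :
    Function.Injective
      (FreeGroup.lift (fun i : Fin 2 =>
        if i = 0 then braidGen (n := 3) 1 * (braidGen (n := 3) 0)⁻¹
        else (braidGen (n := 3) 0)⁻¹ * braidGen (n := 3) 1)) ∧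
    (FreeGroup.lift (fun i : Fin 2 =>
        if i = 0 then braidGen (n := 3) 1 * (braidGen (n := 3) 0)⁻¹
        else (braidGen (n := 3) 0)⁻¹ * braidGen (n := 3) 1)).range
      = commutator (BraidGroup 3) :=
  ⟨K3aux.L_inj, le_antisymm K3aux.range_le K3aux.le_range⟩
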